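/- arXiv:0801.4320 — 2 statements merged into one kernel-verified Lean document; each statement's English description precedes it below -/
import Mathlib

section
/- Let E be a regular (a,b)-module and E^b its biggest simple-pole sub-(a,b)-module. Then the smallest integer m such that bᵐ·E ⊆ E^b equals δ(E), the smallest integer with E^♯ ⊆ b^{−m}·E. -/
set_option synthInstance.maxHeartbeats 1000000
set_option maxHeartbeats 1000000

open PowerSeries

noncomputable section

/-- `ℂ[[b]]`. -/
abbrev Rb := PowerSeries ℂ

variable {E : Type} [AddCommGroup E] [Module Rb E]
  [Module ℂ E] [IsScalarTower ℂ Rb E]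

/-- Multiplication by `bⁿ`, i.e. the submodule `bⁿ·G` of a `ℂ[[b]]`-module. -/
def bpow (n : ℕ) (G : Submodule Rb E) : Submodule Rb E :=
  (Ideal.span {(X : Rb) ^ n}) • G

/-- The operator `b` (multiplication by `X`) as a `ℂ`-linear endomorphism. -/
def bop : E →ₗ[ℂ] E := (LinearMap.lsmul Rb E (X : Rb)).restrictScalars ℂ

/-- An (a,b)-module structure: `E` is a free finite-rank `ℂ[[b]]`-module
and `a` is a `ℂ`-linear, `b`-adically continuous endomorphism with
`a·b − b·a = b²`; equivalently, `a(S·x) = S·a(x) + b²·S'(b)·x` for all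
`S ∈ ℂ[[b]]`. -/
def IsABMod (a : E →ₗ[ℂ] E) : Prop :=
  ∀ (S : Rb) (x : E), a (S • x) = S • a x + ((X : Rb) ^ 2 * derivative ℂ S) • x

/-- The operators `Tⱼ = bʲ·(b⁻¹a)ʲ`, defined recursively by `T₀ = id`,
`T_{j+1} = (a − j·b)∘Tⱼ`. -/
def Tj (a : E →ₗ[ℂ] E) : ℕ → (E →ₗ[ℂ] E)
  | 0 => LinearMap.id
  | (j + 1) => (a - (j : ℂ) • bop) ∘ₗ Tj a j

/-- The `ℂ`-subspace `Σ_{j=0}^{k} aʲ·b^{k−j+1}·E`. -/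
def Psi (a : E →ₗ[ℂ] E) (k : ℕ) : Submodule ℂ E :=
  ⨆ j ∈ Finset.range (k + 1),
    Submodule.map (a ^ j) ((bpow (k - j + 1) ⊤).restrictScalars ℂ)

/-- The regularity condition `a^{k+1}·E ⊆ Σ_{j=0}^{k} aʲ·b^{k−j+1}·E`. -/
def RegCond (a : E →ₗ[ℂ] E) (k : ℕ) : Prop :=
  ∀ x : E, (a ^ (k + 1)) x ∈ Psi a k

/-- `E` is regular (equivalently: some regularity condition holds). -/
def IsRegularAB (a : E →ₗ[ℂ] E) : Prop := ∃ k, RegCond a k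

/-- The regularity order `or(E)`. -/
def regOrder (a : E →ₗ[ℂ] E) : ℕ := sInf {k | RegCond a k}

/-- `b^k·E^♯ = b^k·Φ_k(E) = Σ_{j=0}^{k} b^{k−j}·Tⱼ(E)`: the saturation
`E^♯ = Σ_j (b⁻¹a)ʲ·E` of `E`, renormalized by `b^k` so as to live inside `E`. -/
def Wsat (a : E →ₗ[ℂ] E) (k : ℕ) : Submodule Rb E :=
  Submodule.span Rb
    (⋃ j ∈ Finset.range (k + 1), Set.range fun x : E => ((X : Rb) ^ (k - j)) • (Tj a j x))

/-- A submodule `G ⊆ E` is a simple-pole submodule when `a·G ⊆ b·G`. -/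
def SimplePoleSub (a : E →ₗ[ℂ] E) (G : Submodule Rb E) : Prop :=
  ∀ x ∈ G, a x ∈ bpow 1 G

/-- The index `δ(E)`: the smallest `m` with `E^♯ ⊆ b^{−m}·E`,
i.e. `bᵐ·E^♯ ⊆ E`, i.e. `bᵐ·(b^k·E^♯) ⊆ b^k·E` for `k = or(E)`. -/
def deltaIdx (a : E →ₗ[ℂ] E) : ℕ :=
  sInf {m | bpow m (Wsat a (regOrder a)) ≤ bpow (regOrder a) ⊤}

/-- The biggest simple-pole submodule `E^b` of `E`. -/
def Eb (a : E →ₗ[ℂ] E) : Submodule Rb E := sSup {G | SimplePoleSub a G}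

set_option linter.unusedSectionVars false

-- helper lemmas
lemma mem_bpow {n : ℕ} {G : Submodule Rb E} {x : E} :
    x ∈ bpow n G ↔ ∃ g ∈ G, (X : Rb) ^ n • g = x := by
  constructor
  · intro hx
    refine Submodule.smul_induction_on hx ?_ ?_
    · intro r hr g hg
      obtain ⟨c, rfl⟩ := Ideal.mem_span_singleton.1 hr
      exact ⟨c • g, G.smul_mem c hg, by rw [mul_smul]⟩
    · rintro x y ⟨g, hg, rfl⟩ ⟨g', hg', rfl⟩
      exact ⟨g + g', G.add_mem hg hg', by rw [smul_add]⟩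
  · rintro ⟨g, hg, rfl⟩
    exact Submodule.smul_mem_smul (Ideal.mem_span_singleton_self _) hg

lemma smul_mem_bpow {n : ℕ} {G : Submodule Rb E} {g : E} (hg : g ∈ G) :
    (X : Rb) ^ n • g ∈ bpow n G := mem_bpow.2 ⟨g, hg, rfl⟩

lemma Xsmul_mem_bpow_one {G : Submodule Rb E} {w : E} (h : w ∈ G) :
    (X : Rb) • w ∈ bpow 1 G := by
  have := smul_mem_bpow (n := 1) h
  rwa [pow_one] at this

lemma bpow_mono (n : ℕ) {G H : Submodule Rb E} (h : G ≤ H) : bpow n G ≤ bpow n H :=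
  Submodule.smul_mono le_rfl h

lemma csmul_mem {G : Submodule Rb E} {x : E} (c : ℂ) (h : x ∈ G) : c • x ∈ G := by
  rw [← algebraMap_smul Rb c x]
  exact G.smul_mem _ h

lemma Xpow_cancel [Module.Free Rb E] {n : ℕ} {x y : E}
    (h : (X : Rb) ^ n • x = (X : Rb) ^ n • y) : x = y :=
  smul_right_injective E (pow_ne_zero _ PowerSeries.X_ne_zero) h

lemma ab_pow {a : E →ₗ[ℂ] E} (ha : IsABMod a) (n : ℕ) (x : E) :
    a ((X : Rb) ^ n • x) = (X : Rb) ^ n • a x + (n : ℂ) • ((X : Rb) ^ (n + 1) • x) := by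
  rw [ha]
  congr 1
  have h1 : (X : Rb) ^ 2 * derivative ℂ ((X : Rb) ^ n) = ((n : ℂ) • (1 : Rb)) * (X : Rb) ^ (n + 1) := by
    cases n with
    | zero => simp
    | succ m =>
      rw [Derivation.leibniz_pow]
      simp only [derivative_X, smul_eq_mul, mul_one, Nat.add_sub_cancel, nsmul_eq_mul]
      push_cast
      ring_nf
      rw [Algebra.smul_def]
      push_cast [map_natCast]
      ring
  rw [h1, mul_smul, smul_assoc, one_smul]

lemma aTj {a : E →ₗ[ℂ] E} (j : ℕ) (x : E) :
    a (Tj a j x) = Tj a (j + 1) x + (j : ℂ) • ((X : Rb) • Tj a j x) := by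
  simp [Tj, bop]

/-- The correction set: `aʲ − Tⱼ` is spanned by `bⁱ·T_{j−i}`, `1 ≤ i ≤ j`. -/
def DS (a : E →ₗ[ℂ] E) (j : ℕ) : Set E :=
  {y | ∃ i z, 1 ≤ i ∧ i ≤ j ∧ y = (X : Rb) ^ i • Tj a (j - i) z}

lemma a_span {a : E →ₗ[ℂ] E} {s t : Set E}
    (h : ∀ y ∈ s, a y ∈ Submodule.span ℂ t) :
    ∀ y ∈ Submodule.span ℂ s, a y ∈ Submodule.span ℂ t := by
  intro y hy
  induction hy using Submodule.span_induction with
  | mem y hy => exact h y hy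
  | zero => simp
  | add u v hu hv hpu hpv => rw [map_add]; exact add_mem hpu hpv
  | smul c u hu hpu => rw [map_smul]; exact Submodule.smul_mem _ _ hpu

lemma smul_smul_pow (i j : ℕ) (x : E) :
    (X : Rb) ^ i • ((X : Rb) ^ j • x) = (X : Rb) ^ (i + j) • x := by
  rw [smul_smul, ← pow_add]

lemma Xsplit {m n : ℕ} (h : m = n + 1) (w : E) :
    (X : Rb) ^ m • w = (X : Rb) • ((X : Rb) ^ n • w) := by
  subst h; rw [smul_smul, ← pow_succ']

lemma pow_sub_Tj {a : E →ₗ[ℂ] E} (ha : IsABMod a) :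
    ∀ j x, (a ^ j) x - Tj a j x ∈ Submodule.span ℂ (DS a j) := by
  intro j
  induction j with
  | zero => intro x; simp [Tj]
  | succ j IH =>
    intro x
    have e1 : (a ^ (j + 1)) x = a ((a ^ j) x) := by
      rw [pow_succ']; rfl
    have e2 : Tj a (j + 1) x = a (Tj a j x) - (j : ℂ) • ((X : Rb) • Tj a j x) := by
      simp [Tj, bop]
    have e3 : (a ^ (j + 1)) x - Tj a (j + 1) x
        = a ((a ^ j) x - Tj a j x) + (j : ℂ) • ((X : Rb) • Tj a j x) := by
      rw [e1, e2, map_sub]; abel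
    rw [e3]
    refine add_mem ?_ (Submodule.smul_mem _ _ (Submodule.subset_span ?_))
    · refine a_span (fun y hy => ?_) _ (IH x)
      obtain ⟨i, z, hi1, hij, rfl⟩ := hy
      have hsum : a ((X : Rb) ^ i • Tj a (j - i) z)
          = (X : Rb) ^ i • Tj a (j + 1 - i) z
            + ((j - i : ℕ) : ℂ) • ((X : Rb) ^ (i + 1) • Tj a (j + 1 - (i + 1)) z)
            + (i : ℂ) • ((X : Rb) ^ (i + 1) • Tj a (j + 1 - (i + 1)) z) := by
        have h1 : j + 1 - i = (j - i) + 1 := by omega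
        have h2 : j + 1 - (i + 1) = j - i := by omega
        rw [ab_pow ha, aTj, h1, h2, smul_add]
        rw [show (X : Rb) ^ i • ((j - i : ℕ) : ℂ) • ((X : Rb) • Tj a (j - i) z)
              = ((j - i : ℕ) : ℂ) • ((X : Rb) ^ (i + 1) • Tj a (j - i) z) by
          rw [smul_comm, smul_smul, ← pow_succ]
        ]
      rw [hsum]
      refine add_mem (add_mem (Submodule.subset_span ?_) (Submodule.smul_mem _ _
        (Submodule.subset_span ?_))) (Submodule.smul_mem _ _ (Submodule.subset_span ?_))
      · exact ⟨i, z, hi1, by omega, rfl⟩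
      · exact ⟨i + 1, z, by omega, by omega, rfl⟩
      · exact ⟨i + 1, z, by omega, by omega, rfl⟩
    · exact ⟨1, x, le_refl 1, by omega, by rw [pow_one, Nat.add_sub_cancel]⟩

lemma comm_pow {a : E →ₗ[ℂ] E} (ha : IsABMod a) :
    ∀ (j m : ℕ) (y : E), (a ^ j) ((X : Rb) ^ m • y) ∈
      Submodule.span ℂ {w | ∃ i, i ≤ j ∧ w = (X : Rb) ^ (m + i) • ((a ^ (j - i)) y)} := by
  intro j
  induction j with
  | zero =>
    intro m y
    exact Submodule.subset_span ⟨0, le_refl 0, by simp⟩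
  | succ j IH =>
    intro m y
    have e1 : (a ^ (j + 1)) ((X : Rb) ^ m • y) = a ((a ^ j) ((X : Rb) ^ m • y)) := by
      rw [pow_succ']; rfl
    rw [e1]
    refine a_span (fun w hw => ?_) _ (IH m y)
    obtain ⟨i, hij, rfl⟩ := hw
    have e2 : a ((X : Rb) ^ (m + i) • ((a ^ (j - i)) y))
        = (X : Rb) ^ (m + i) • ((a ^ (j + 1 - i)) y)
          + ((m + i : ℕ) : ℂ) • ((X : Rb) ^ (m + (i + 1)) • ((a ^ (j + 1 - (i + 1))) y)) := by
      have h1 : j + 1 - i = (j - i) + 1 := by omega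
      have h2 : j + 1 - (i + 1) = j - i := by omega
      have h3 : m + i + 1 = m + (i + 1) := by omega
      rw [ab_pow ha, h1, h2, h3]
      congr 2
      rw [pow_succ']
      rfl
    rw [e2]
    refine add_mem (Submodule.subset_span ⟨i, by omega, rfl⟩)
      (Submodule.smul_mem _ _ (Submodule.subset_span ⟨i + 1, by omega, rfl⟩))

lemma gen_mem_Wsat {a : E →ₗ[ℂ] E} {k j : ℕ} (hj : j ≤ k) (x : E) :
    (X : Rb) ^ (k - j) • Tj a j x ∈ Wsat a k := by
  apply Submodule.subset_span
  exact Set.mem_iUnion₂.2 ⟨j, Finset.mem_range.2 (by omega), ⟨x, rfl⟩⟩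

lemma Xpow_apow_mem {a : E →ₗ[ℂ] E} (ha : IsABMod a) {k l : ℕ} (hl : l ≤ k) (y : E) :
    (X : Rb) ^ (k + 1 - l) • ((a ^ l) y) ∈ bpow 1 (Wsat a k) := by
  have hdec : (a ^ l) y = ((a ^ l) y - Tj a l y) + Tj a l y := by abel
  have key : ∀ u ∈ Submodule.span ℂ (DS a l),
      (X : Rb) ^ (k + 1 - l) • u ∈ bpow 1 (Wsat a k) := by
    intro u hu
    induction hu using Submodule.span_induction with
    | mem w hw =>
      obtain ⟨i, z, hi1, hil, rfl⟩ := hw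
      rw [smul_smul_pow]
      have h1 : k + 1 - l + i = (k - (l - i)) + 1 := by omega
      rw [h1, pow_succ', mul_smul]
      exact Xsmul_mem_bpow_one (gen_mem_Wsat (by omega) z)
    | zero => rw [smul_zero]; exact zero_mem _
    | add u v hu hv hpu hpv => rw [smul_add]; exact add_mem hpu hpv
    | smul c u hu hpu => rw [smul_comm]; exact csmul_mem c hpu
  rw [hdec, smul_add]
  refine add_mem ?_ ?_
  · exact key _ (pow_sub_Tj ha l y)
  · have h1 : k + 1 - l = (k - l) + 1 := by omega
    rw [h1, pow_succ', mul_smul]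
    exact Xsmul_mem_bpow_one (gen_mem_Wsat hl y)

lemma Psi_le {a : E →ₗ[ℂ] E} (ha : IsABMod a) (k : ℕ) :
    Psi a k ≤ (bpow 1 (Wsat a k)).restrictScalars ℂ := by
  refine iSup_le fun j => iSup_le fun hj => ?_
  have hjk : j ≤ k := by
    have := Finset.mem_range.1 hj; omega
  rintro _ ⟨y, hy, rfl⟩
  obtain ⟨g, -, rfl⟩ := mem_bpow.1 hy
  have h := comm_pow ha j (k - j + 1) g
  refine Submodule.span_le.2 ?_ h
  rintro w ⟨i, hij, rfl⟩
  have h1 : k - j + 1 + i = k + 1 - (j - i) := by omega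
  rw [h1]
  exact Xpow_apow_mem ha (by omega) g

lemma Wsat_simple {a : E →ₗ[ℂ] E} (ha : IsABMod a) {k : ℕ} (hk : RegCond a k) :
    SimplePoleSub a (Wsat a k) := by
  intro w hw
  induction hw using Submodule.span_induction with
  | mem w hw =>
    obtain ⟨j, hj, x, rfl⟩ := Set.mem_iUnion₂.1 hw
    have hjk : j ≤ k := by
      have := Finset.mem_range.1 hj; omega
    rw [ab_pow ha, aTj, smul_add]
    refine add_mem (add_mem ?_ ?_) ?_
    · -- X^(k-j) • Tj a (j+1) x
      rcases Nat.lt_or_ge j k with hlt | hge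
      · have h1 : k - j = (k - (j + 1)) + 1 := by omega
        rw [h1, pow_succ', mul_smul]
        exact Xsmul_mem_bpow_one (gen_mem_Wsat (by omega) x)
      · have hjeq : j = k := by omega
        subst hjeq
        rw [Nat.sub_self, pow_zero, one_smul]
        have hdec : Tj a (j + 1) x = (a ^ (j + 1)) x - ((a ^ (j + 1)) x - Tj a (j + 1) x) := by
          abel
        rw [hdec]
        refine sub_mem ?_ ?_
        · exact Psi_le ha j (hk x)
        · have hd := pow_sub_Tj ha (j + 1) x
          have hle : Submodule.span ℂ (DS a (j + 1)) ≤ (bpow 1 (Wsat a j)).restrictScalars ℂ := by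
            rw [Submodule.span_le]
            rintro w ⟨i, z, hi1, hil, rfl⟩
            rw [Xsplit (show i = (j - (j + 1 - i)) + 1 by omega)]
            exact Xsmul_mem_bpow_one (gen_mem_Wsat (k := j) (j := j + 1 - i) (by omega) z)
          exact hle hd
    · -- X^(k-j) • (j • (X • Tj a j x))
      rw [smul_comm, smul_smul, ← pow_succ, pow_succ', mul_smul]
      exact csmul_mem _ (Xsmul_mem_bpow_one (gen_mem_Wsat hjk x))
    · rw [pow_succ', mul_smul]
      exact csmul_mem _ (Xsmul_mem_bpow_one (gen_mem_Wsat hjk x))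
  | zero => rw [map_zero]; exact zero_mem _
  | add u v hu hv hpu hpv => rw [map_add]; exact add_mem hpu hpv
  | smul S u hu hpu =>
    rw [ha]
    refine add_mem (Submodule.smul_mem _ _ hpu) ?_
    have h1 : ((X : Rb) ^ 2 * derivative ℂ S) • u = (X : Rb) • (((X : Rb) * derivative ℂ S) • u) := by
      rw [smul_smul, pow_two, mul_assoc]
    rw [h1]
    exact Xsmul_mem_bpow_one (Submodule.smul_mem _ _ hu)

lemma Eb_simple {a : E →ₗ[ℂ] E} (ha : IsABMod a) : SimplePoleSub a (Eb a) := by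
  let H : Submodule Rb E :=
    { carrier := {x | x ∈ Eb a ∧ a x ∈ bpow 1 (Eb a)}
      add_mem' := fun hx hy =>
        ⟨add_mem hx.1 hy.1, by rw [map_add]; exact add_mem hx.2 hy.2⟩
      zero_mem' := ⟨zero_mem _, by rw [map_zero]; exact zero_mem _⟩
      smul_mem' := fun S x hx => by
        refine ⟨Submodule.smul_mem _ _ hx.1, ?_⟩
        rw [ha]
        refine add_mem (Submodule.smul_mem _ _ hx.2) ?_
        have h1 : ((X : Rb) ^ 2 * derivative ℂ S) • x
            = (X : Rb) • (((X : Rb) * derivative ℂ S) • x) := by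
          rw [smul_smul, pow_two, mul_assoc]
        rw [h1]
        exact Xsmul_mem_bpow_one (Submodule.smul_mem _ _ hx.1) }
  have hle : Eb a ≤ H := by
    refine sSup_le fun G hG => fun x hx => ?_
    exact ⟨le_sSup hG hx, bpow_mono 1 (le_sSup hG) (hG x hx)⟩
  exact fun x hx => (hle hx).2


/-- Let `E` be a regular (a,b)-module and `E^b` its biggest simple-pole
sub-(a,b)-module.  The smallest integer `m` such that `bᵐ·E ⊆ E^b` equals
`δ(E)`, the smallest integer with `E^♯ ⊆ b^{−m}·E`. -/
theorem stmt_8 [Module.Free Rb E] [Module.Finite Rb E]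
    (a : E →ₗ[ℂ] E) (ha : IsABMod a) (hreg : IsRegularAB a) :
    sInf {m : ℕ | bpow m ⊤ ≤ Eb a} = deltaIdx a := by
  set k := regOrder a with hkdef
  have hk : RegCond a k := Nat.sInf_mem hreg
  set W := Wsat a k with hWdef
  -- the δ-defining set is nonempty (k belongs to it)
  have hknonempty : k ∈ {m | bpow m W ≤ bpow k (⊤ : Submodule Rb E)} :=
    bpow_mono k le_top
  set δ := deltaIdx a with hδdef
  have hδmem : bpow δ W ≤ bpow k (⊤ : Submodule Rb E) := Nat.sInf_mem ⟨k, hknonempty⟩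
  have hδk : δ ≤ k := Nat.sInf_le hknonempty
  -- every element of W is divisible by X^(k-δ)
  have hdiv : ∀ w ∈ W, ∃ e : E, (X : Rb) ^ (k - δ) • e = w := by
    intro w hw
    have h1 : (X : Rb) ^ δ • w ∈ bpow k (⊤ : Submodule Rb E) :=
      hδmem (smul_mem_bpow hw)
    obtain ⟨e, -, he⟩ := mem_bpow.1 h1
    refine ⟨e, Xpow_cancel (n := δ) ?_⟩
    rw [← he, smul_smul_pow]
    have hh : δ + (k - δ) = k := by omega
    rw [hh]
  -- the simple-pole submodule G = b^δ·E^♯ (as a comap)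
  set G : Submodule Rb E := Submodule.comap (LinearMap.lsmul Rb E ((X : Rb) ^ (k - δ))) W
    with hGdef
  have hmemG : ∀ x : E, x ∈ G ↔ (X : Rb) ^ (k - δ) • x ∈ W := by
    intro x
    rw [hGdef, Submodule.mem_comap, LinearMap.lsmul_apply]
  have hGsp : SimplePoleSub a G := by
    intro x hx
    have hx' : (X : Rb) ^ (k - δ) • x ∈ W := (hmemG x).1 hx
    have h1 : (X : Rb) ^ (k - δ) • a x ∈ bpow 1 W := by
      have h2 := ab_pow ha (k - δ) x
      have h3 : (X : Rb) ^ (k - δ) • a x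
          = a ((X : Rb) ^ (k - δ) • x) - ((k - δ : ℕ) : ℂ) • ((X : Rb) ^ (k - δ + 1) • x) := by
        rw [h2]; abel
      rw [h3]
      refine sub_mem (Wsat_simple ha hk _ hx') ?_
      rw [Xsplit (show k - δ + 1 = (k - δ) + 1 by omega)]
      exact csmul_mem _ (Xsmul_mem_bpow_one hx')
    obtain ⟨w, hw, hwe⟩ := mem_bpow.1 h1
    obtain ⟨e, he⟩ := hdiv w hw
    have heG : e ∈ G := (hmemG e).2 (he ▸ hw)
    refine mem_bpow.2 ⟨e, heG, ?_⟩
    apply Xpow_cancel (n := k - δ)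
    rw [smul_smul_pow, ← hwe, ← he, smul_smul_pow]
    have hh : k - δ + 1 = 1 + (k - δ) := by omega
    rw [hh]
  have hbδG : bpow δ (⊤ : Submodule Rb E) ≤ G := by
    intro x hx
    obtain ⟨g, -, rfl⟩ := mem_bpow.1 hx
    refine (hmemG _).2 ?_
    rw [smul_smul_pow]
    have h0 : (X : Rb) ^ (k - δ + δ) • g = (X : Rb) ^ (k - 0) • Tj a 0 g := by
      simp [Tj]
      congr 2
      omega
    rw [h0]
    exact gen_mem_Wsat (by omega) g
  have hδLHS : δ ∈ {m : ℕ | bpow m ⊤ ≤ Eb a} :=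
    le_trans hbδG (le_sSup hGsp)
  -- the other direction
  set m := sInf {m : ℕ | bpow m ⊤ ≤ Eb a} with hmdef
  have hm : bpow m ⊤ ≤ Eb a := Nat.sInf_mem ⟨δ, hδLHS⟩
  have hEbsp : SimplePoleSub a (Eb a) := Eb_simple ha
  -- key: X^m • Tj a j x ∈ bpow j (Eb a)
  have Hj : ∀ (j : ℕ) (x : E), (X : Rb) ^ m • Tj a j x ∈ bpow j (Eb a) := by
    intro j
    induction j with
    | zero =>
      intro x
      have h1 : (X : Rb) ^ m • Tj a 0 x ∈ Eb a := hm (smul_mem_bpow (by trivial))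
      rw [show bpow 0 (Eb a) = Eb a by
        rw [bpow, pow_zero, Ideal.span_singleton_one, Submodule.top_smul]]
      exact h1
    | succ j IH =>
      intro x
      obtain ⟨e, he, hee⟩ := mem_bpow.1 (IH x)
      obtain ⟨e', he', hee'⟩ := mem_bpow.1 (hEbsp e he)
      have e2 : Tj a (j + 1) x = a (Tj a j x) - (j : ℂ) • ((X : Rb) • Tj a j x) := by
        simp [Tj, bop]
      have e3 : (X : Rb) ^ m • a (Tj a j x)
          = a ((X : Rb) ^ m • Tj a j x) - (m : ℂ) • ((X : Rb) ^ (m + 1) • Tj a j x) := by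
        rw [ab_pow ha]; abel
      have e4 : (X : Rb) ^ (m + 1) • Tj a j x = (X : Rb) ^ (j + 1) • e := by
        rw [Xsplit (show m + 1 = m + 1 from rfl), ← hee,
          ← Xsplit (show j + 1 = j + 1 from rfl)]
      have e5' : (X : Rb) ^ m • ((j : ℂ) • ((X : Rb) • Tj a j x))
          = (j : ℂ) • ((X : Rb) ^ (j + 1) • e) := by
        rw [smul_comm ((X : Rb) ^ m) (j : ℂ), smul_comm ((X : Rb) ^ m) (X : Rb), ← hee,
          ← Xsplit (show j + 1 = j + 1 from rfl)]
      have e6 : a ((X : Rb) ^ m • Tj a j x) ∈ bpow (j + 1) (Eb a) := by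
        rw [← hee, ab_pow ha]
        refine add_mem ?_ (csmul_mem _ (smul_mem_bpow he))
        rw [← hee', smul_smul_pow]
        exact smul_mem_bpow he'
      rw [e2, smul_sub, e3, e4, e5']
      exact sub_mem (sub_mem e6 (csmul_mem _ (smul_mem_bpow he)))
        (csmul_mem _ (smul_mem_bpow he))
  have hmδ : m ∈ {m' | bpow m' W ≤ bpow k (⊤ : Submodule Rb E)} := by
    intro x hx
    obtain ⟨w, hw, rfl⟩ := mem_bpow.1 hx
    have key : ∀ w ∈ W, (X : Rb) ^ m • w ∈ bpow k (⊤ : Submodule Rb E) := by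
      intro w hw
      induction hw using Submodule.span_induction with
      | mem w hw =>
        obtain ⟨j, hj, x, rfl⟩ := Set.mem_iUnion₂.1 hw
        have hjk : j ≤ k := by
          have := Finset.mem_range.1 hj; omega
        rw [smul_comm]
        obtain ⟨e, -, hee⟩ := mem_bpow.1 (Hj j x)
        rw [← hee, smul_smul_pow]
        have h1 : k - j + j = k := by omega
        rw [h1]
        exact smul_mem_bpow trivial
      | zero => rw [smul_zero]; exact zero_mem _
      | add u v hu hv hpu hpv => rw [smul_add]; exact add_mem hpu hpv
      | smul S u hu hpu =>
        rw [smul_comm]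
        exact Submodule.smul_mem _ _ hpu
    exact key w hw
  have h1 : sInf {m : ℕ | bpow m ⊤ ≤ Eb a} ≤ δ := Nat.sInf_le hδLHS
  have h2 : δ ≤ m := Nat.sInf_le hmδ
  omega

end
end

section
/- Let V_λ := Ã/(Ã·(a−λ) + Ã·b) for λ ∈ ℂ. Then the sequence 0 → Ã →^α Ã² →^β Ã → V_λ → 0, with α(x) := (x·b, −x·(a−b−λ)) and β(u,v) := u·(a−λ) + v·b, is an exact (free) resolution of V_λ by left Ã-modules. -/
set_option synthInstance.maxHeartbeats 1000000
set_option maxHeartbeats 1000000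

open PowerSeries

noncomputable section

/-- `ℂ[[z]]`, on which the algebra `Ã` acts faithfully. -/
abbrev PS := PowerSeries ℂ

/-- The operator `a := multiplication by z` on `ℂ[[z]]`. -/
def opA : Module.End ℂ PS where
  toFun f := X * f
  map_add' := by intro f g; ring
  map_smul' := by intro c f; simp [mul_smul_comm]

/-- The operator `b := ∫₀ᶻ` (primitive without constant term) on `ℂ[[z]]`.
One has `a∘b - b∘a = b∘b`, so these operators realize the commutation relation
`a·b - b·a = b²` of `Ã`. -/
def opB : Module.End ℂ PS where
  toFun f := PowerSeries.mk fun n => if n = 0 then 0 else coeff (n - 1) f / (n : ℂ)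
  map_add' := by
    intro f g; ext n; by_cases h : n = 0 <;> simp [h, add_div]
  map_smul' := by
    intro c f; ext n; by_cases h : n = 0 <;> simp [h, mul_div_assoc]

/-- The algebra `Ã = { Σ_{ν ≥ 0} P_ν(a)·bᵛ }` (with `P_ν ∈ ℂ[z]`, commutation
relation `a·b − b·a = b²`), realized concretely as the set of endomorphisms of
`ℂ[[z]]` given by a (formal, `b`-adically convergent) series `Σ_ν P_ν(a)·bᵛ`
with polynomial coefficients `P_ν`.  Since `bᵛ` raises the `z`-order by `ν`,
the coefficient of `zⁿ` of `T f` only involves the terms with `ν ≤ n`. -/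
def Atilde : Set (Module.End ℂ PS) :=
  {T | ∃ P : ℕ → Polynomial ℂ, ∀ (f : PS) (n : ℕ),
    coeff n (T f) =
      ∑ ν ∈ Finset.range (n + 1),
        coeff n ((Polynomial.aeval opA (P ν)) ((opB ^ ν) f))}

lemma coeff_opB (f : PS) (n : ℕ) :
    coeff n (opB f) = if n = 0 then 0 else coeff (n - 1) f / (n : ℂ) := by
  simp [opB]

lemma opA_pow (n : ℕ) (f : PS) : (opA ^ n) f = X ^ n * f := by
  induction n generalizing f with
  | zero => simp
  | succ n ih =>
      rw [pow_succ, Module.End.mul_apply, show opA f = X * f from rfl, ih, pow_succ]; ring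

lemma aeval_opA (Q : Polynomial ℂ) (f : PS) :
    Polynomial.aeval opA Q f = (Q : PS) * f := by
  induction Q using Polynomial.induction_on' with
  | add p q hp hq => simp [hp, hq, add_mul]
  | monomial n c =>
      rw [Polynomial.aeval_monomial, Module.End.mul_apply, opA_pow, Polynomial.coe_monomial]
      rw [show ((algebraMap ℂ (Module.End ℂ PS)) c) (X ^ n * f) = c • (X^n * f) from rfl]
      rw [monomial_eq_mk]
      ext m
      simp [PowerSeries.coeff_mul, PowerSeries.coeff_X_pow, Finset.sum_ite_eq,
        Finset.mul_sum]

lemma opB_X_pow (m : ℕ) : opB ((X:PS)^m) = ((m+1 : ℂ))⁻¹ • (X:PS)^(m+1) := by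
  ext n
  rw [coeff_opB]
  rcases n with _ | n
  · simp
  · simp only [Nat.succ_sub_one, PowerSeries.coeff_X_pow, map_smul, smul_eq_mul]
    by_cases h : n = m
    · subst h; simp [div_eq_inv_mul]
    · simp [h, Nat.succ_ne_succ.mpr h]

lemma opB_pow_X_pow (ν k : ℕ) :
    (opB ^ ν) ((X:PS)^k) = ((Nat.factorial k : ℂ)/((Nat.factorial (k+ν)) : ℂ)) • (X:PS)^(k+ν) := by
  have fne : ∀ m : ℕ, ((Nat.factorial m : ℂ)) ≠ 0 := fun m =>
    Nat.cast_ne_zero.mpr (Nat.factorial_ne_zero m)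
  induction ν generalizing k with
  | zero => rw [pow_zero, Module.End.one_apply, Nat.add_zero, div_self (fne k), one_smul]
  | succ ν ih =>
      rw [pow_succ', Module.End.mul_apply, ih, map_smul, opB_X_pow, smul_smul, ← add_assoc]
      congr 1
      have h1 := fne (k+ν)
      have h2 : ((k+ν : ℕ) : ℂ) + 1 ≠ 0 := Nat.cast_add_one_ne_zero _
      rw [show k + ν + 1 = (k+ν) + 1 from rfl, Nat.factorial_succ]
      push_cast
      field_simp

lemma opB_pow_order (ν : ℕ) (f : PS) (m : ℕ) (h : m < ν) :
    coeff m ((opB ^ ν) f) = 0 := by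
  induction ν generalizing m with
  | zero => omega
  | succ ν ih =>
      rw [pow_succ', Module.End.mul_apply, coeff_opB]
      rcases Nat.eq_zero_or_pos m with hm | hm
      · simp [hm]
      · rw [if_neg (by omega), ih (m-1) (by omega), zero_div]



/-- the coefficient sums appearing when a series operator is applied to `X^k` -/
def Sfun (P : ℕ → Polynomial ℂ) (s k : ℕ) : ℂ :=
  ∑ ν ∈ Finset.range (s + 1),
    ((Nat.factorial k : ℂ) / (Nat.factorial (k + ν) : ℂ)) * (P ν).coeff (s - ν)

lemma coeff_term (Q : Polynomial ℂ) (ν k n : ℕ) :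
    coeff n ((Polynomial.aeval opA Q) ((opB ^ ν) ((X:PS)^k))) =
      if k + ν ≤ n then ((Nat.factorial k : ℂ) / (Nat.factorial (k + ν) : ℂ)) * Q.coeff (n - (k+ν))
      else 0 := by
  rw [opB_pow_X_pow, map_smul, aeval_opA, map_smul, smul_eq_mul,
    PowerSeries.coeff_mul_X_pow', Polynomial.coeff_coe]
  split
  · rfl
  · exact mul_zero _

lemma coeff_T_Xpow (T : Module.End ℂ PS) (P : ℕ → Polynomial ℂ)
    (hP : ∀ (f : PS) (n : ℕ), coeff n (T f) =
      ∑ ν ∈ Finset.range (n + 1),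
        coeff n ((Polynomial.aeval opA (P ν)) ((opB ^ ν) f)))
    (k s : ℕ) : coeff (k + s) (T ((X:PS)^k)) = Sfun P s k := by
  rw [hP]
  rw [show Sfun P s k = ∑ ν ∈ Finset.range (s+1),
      coeff (k+s) ((Polynomial.aeval opA (P ν)) ((opB ^ ν) ((X:PS)^k))) from ?_]
  · refine (Finset.sum_subset ?_ ?_).symm
    · exact Finset.range_subset_range.mpr (by omega)
    · intro ν _ hν
      rw [Finset.mem_range, not_lt] at hν
      rw [coeff_term, if_neg (by omega)]
  · unfold Sfun
    refine Finset.sum_congr rfl fun ν hν => ?_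
    rw [Finset.mem_range] at hν
    rw [coeff_term, if_pos (by omega)]
    congr 2
    omega

lemma coeff_T_Xpow_lt (T : Module.End ℂ PS) (P : ℕ → Polynomial ℂ)
    (hP : ∀ (f : PS) (n : ℕ), coeff n (T f) =
      ∑ ν ∈ Finset.range (n + 1),
        coeff n ((Polynomial.aeval opA (P ν)) ((opB ^ ν) f)))
    (k n : ℕ) (h : n < k) : coeff n (T ((X:PS)^k)) = 0 := by
  rw [hP]
  refine Finset.sum_eq_zero fun ν _ => ?_
  rw [coeff_term, if_neg (by omega)]

lemma tendsto_factRatio (m ν : ℕ) (h : m < ν) :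
    Filter.Tendsto (fun k : ℕ => ((Nat.factorial (k+m) : ℂ) / (Nat.factorial (k+ν) : ℂ)))
      Filter.atTop (nhds 0) := by
  apply squeeze_zero_norm (a := fun k : ℕ => 1 / ((k:ℝ) + 1))
  · intro k
    have hb : (0:ℝ) < (Nat.factorial (k+ν) : ℝ) := by positivity
    rw [norm_div, Complex.norm_natCast, Complex.norm_natCast,
      div_le_div_iff₀ hb (by positivity), one_mul]
    have : (k + m).factorial * (k+1) ≤ (k + ν).factorial := by
      calc (k + m).factorial * (k+1) ≤ (k + m).factorial * (k + m + 1) := by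
            exact Nat.mul_le_mul_left _ (by omega)
        _ = (k + m + 1).factorial := by
            rw [Nat.factorial_succ]; ring
        _ ≤ (k + ν).factorial := Nat.factorial_le (by omega)
    calc ((k+m).factorial : ℝ) * ((k:ℝ)+1) = (((k + m).factorial * (k+1) : ℕ) : ℝ) := by
          push_cast; ring
      _ ≤ ((k + ν).factorial : ℝ) := Nat.cast_le.mpr this
  · exact tendsto_one_div_add_atTop_nhds_zero_nat

lemma tendsto_Ssum (c : ℕ → ℂ) (s m : ℕ) (hm : m ≤ s) (h0 : ∀ ν < m, c ν = 0) :
    Filter.Tendsto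
      (fun k : ℕ => ∑ ν ∈ Finset.range (s+1),
        ((Nat.factorial (k+m) : ℂ) / (Nat.factorial (k+ν) : ℂ)) * c ν)
      Filter.atTop (nhds (c m)) := by
  have fne : ∀ m : ℕ, ((Nat.factorial m : ℂ)) ≠ 0 := fun m =>
    Nat.cast_ne_zero.mpr (Nat.factorial_ne_zero m)
  have : c m = ∑ ν ∈ Finset.range (s+1), (if ν = m then c m else 0) := by
    rw [Finset.sum_ite_eq' (Finset.range (s+1)) m (fun _ => c m), if_pos]
    exact Finset.mem_range.mpr (by omega)
  rw [this]
  apply Filter.Tendsto.congr (f₁ := fun k => ∑ ν ∈ Finset.range (s+1),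
    (fun ν k => ((Nat.factorial (k+m) : ℂ) / (Nat.factorial (k+ν) : ℂ)) * c ν) ν k)
  · intro k; rfl
  apply tendsto_finset_sum
  intro ν _
  rcases lt_trichotomy ν m with hlt | heq | hgt
  · simp only [h0 ν hlt, mul_zero, if_neg (by omega : ¬ ν = m)]
    exact tendsto_const_nhds
  · subst heq
    simp only [if_pos rfl]
    apply Filter.Tendsto.congr (f₁ := fun _ => c ν)
    · intro k; rw [div_self (fne _), one_mul]
    · exact tendsto_const_nhds
  · simp only [if_neg (by omega : ¬ ν = m)]
    have := (tendsto_factRatio m ν hgt).mul_const (c ν)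
    rwa [zero_mul] at this

lemma diag_vanish (c : ℕ → ℂ) (s : ℕ)
    (h : ∀ᶠ k in Filter.atTop, ∑ ν ∈ Finset.range (s+1),
      ((Nat.factorial k : ℂ) / (Nat.factorial (k+ν) : ℂ)) * c ν = 0) :
    ∀ m, m ≤ s → c m = 0 := by
  have fne : ∀ m : ℕ, ((Nat.factorial m : ℂ)) ≠ 0 := fun m =>
    Nat.cast_ne_zero.mpr (Nat.factorial_ne_zero m)
  intro m
  induction m using Nat.strong_induction_on with
  | _ m ih =>
    intro hm
    have h2 : ∀ᶠ k in Filter.atTop, ∑ ν ∈ Finset.range (s+1),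
        ((Nat.factorial (k+m) : ℂ) / (Nat.factorial (k+ν) : ℂ)) * c ν = 0 := by
      refine h.mono fun k hk => ?_
      have : ∀ ν, ((Nat.factorial (k+m) : ℂ) / (Nat.factorial (k+ν) : ℂ)) * c ν
          = ((Nat.factorial (k+m) : ℂ) / (Nat.factorial k : ℂ)) *
            (((Nat.factorial k : ℂ) / (Nat.factorial (k+ν) : ℂ)) * c ν) := by
        intro ν
        rw [← mul_assoc, div_mul_div_comm, mul_comm ((Nat.factorial (k+m) : ℂ)) _,
          mul_div_mul_left _ _ (fne k)]
      simp only [this, ← Finset.mul_sum, hk, mul_zero]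
    have t1 := tendsto_Ssum c s m hm (fun ν hν => ih ν hν (by omega))
    have t2 : Filter.Tendsto (fun k : ℕ => ∑ ν ∈ Finset.range (s+1),
        ((Nat.factorial (k+m) : ℂ) / (Nat.factorial (k+ν) : ℂ)) * c ν)
        Filter.atTop (nhds 0) :=
      Filter.Tendsto.congr' (Filter.EventuallyEq.symm h2) tendsto_const_nhds
    exact tendsto_nhds_unique t1 t2

lemma L1 (T : Module.End ℂ PS) (hT : T ∈ Atilde) (h : T * opB = 0) : T = 0 := by
  obtain ⟨P, hP⟩ := hT
  have hTopB : ∀ g : PS, T (opB g) = 0 := by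
    intro g
    have := congrFun (congrArg DFunLike.coe h) g
    simpa using this
  have hXk : ∀ k : ℕ, 1 ≤ k → T ((X:PS)^k) = 0 := by
    intro k hk
    have hk0 : ((k:ℂ)) ≠ 0 := Nat.cast_ne_zero.mpr (by omega)
    have hc : ((k:ℂ)) * ((((k-1:ℕ)):ℂ)+1)⁻¹ = 1 := by
      rw [show (((k-1:ℕ)):ℂ) = (k:ℂ) - 1 from by
        push_cast [Nat.cast_sub (by omega : 1 ≤ k)]; ring]
      rw [sub_add_cancel, mul_inv_cancel₀ hk0]
    have : (X:PS)^k = opB ((k:ℂ) • (X:PS)^(k-1)) := by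
      rw [map_smul, opB_X_pow, smul_smul, show k - 1 + 1 = k from by omega, hc, one_smul]
    rw [this, hTopB]
  have hdiag : ∀ s ν : ℕ, ν ≤ s → (P ν).coeff (s - ν) = 0 := by
    intro s
    apply diag_vanish
    filter_upwards [Filter.eventually_ge_atTop 1] with k hk
    have := coeff_T_Xpow T P hP k s
    rw [hXk k hk, map_zero] at this
    simpa [Sfun] using this.symm
  have hT1 : T 1 = 0 := by
    ext s
    have := coeff_T_Xpow T P hP 0 s
    rw [pow_zero] at this
    rw [show (0 + s) = s from by omega] at this
    rw [this, map_zero]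
    exact Finset.sum_eq_zero fun ν hν => by
      rw [hdiag s ν (by simpa using Nat.lt_succ_iff.mp (Finset.mem_range.mp hν)), mul_zero]
  ext f
  have hsplit : f = (constantCoeff f) • (1:PS) +
      opB (PowerSeries.mk fun n => ((n:ℂ)+1) * coeff (n+1) f) := by
    ext n
    rcases n with _ | n
    · have h0 : ∀ g, constantCoeff (opB g) = 0 := fun g => by simpa using coeff_opB g 0
      simp [h0]
    · rw [map_add, map_smul, coeff_opB, if_neg (Nat.succ_ne_zero n)]
      simp only [Nat.succ_sub_one, coeff_mk, PowerSeries.coeff_one,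
        if_neg (Nat.succ_ne_zero n), smul_eq_mul, mul_zero, zero_add]
      have hne : ((n:ℂ)) + 1 ≠ 0 := Nat.cast_add_one_ne_zero n
      push_cast
      field_simp
  rw [LinearMap.zero_apply, hsplit, map_add, map_smul, hT1, hTopB, smul_zero, zero_add]

lemma coeff_opA (f : PS) (n : ℕ) :
    coeff n (opA f) = if n = 0 then 0 else coeff (n - 1) f := by
  rcases n with _ | n
  · simp [opA, PowerSeries.coeff_zero_eq_constantCoeff]
  · rw [show opA f = X * f from rfl, PowerSeries.coeff_succ_X_mul]
    simp

lemma constantCoeff_opB (g : PS) : constantCoeff (opB g) = 0 := by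
  simpa using coeff_opB g 0

lemma commrel : opB * opA = opA * opB - opB * opB := by
  ext f n
  simp only [Module.End.mul_apply, LinearMap.sub_apply, map_sub]
  rw [coeff_opB, coeff_opA, coeff_opA, coeff_opB]
  rcases n with _ | n
  · simp [constantCoeff_opB]
  · rcases n with _ | n
    · simp [coeff_opB]
    · simp only [Nat.succ_ne_zero, if_neg, if_false, Nat.succ_sub_one]
      rw [coeff_opB, coeff_opB]
      have h1 : ((n:ℂ) + 1) ≠ 0 := Nat.cast_add_one_ne_zero n
      have h2 : ((n:ℂ) + 1 + 1) ≠ 0 := by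
        have := Nat.cast_add_one_ne_zero (R := ℂ) (n+1)
        push_cast at this
        exact this
      norm_num
      push_cast
      field_simp
      ring

lemma tendsto_Sfun (P : ℕ → Polynomial ℂ) (s : ℕ) :
    Filter.Tendsto (fun k : ℕ => Sfun P s k) Filter.atTop (nhds ((P 0).coeff s)) := by
  have := tendsto_Ssum (fun ν => (P ν).coeff (s - ν)) s 0 (by omega) (by omega)
  simp only [Nat.add_zero] at this
  simpa [Sfun] using this

lemma tendsto_Sfun_succ (P : ℕ → Polynomial ℂ) (s : ℕ) :
    Filter.Tendsto (fun k : ℕ => Sfun P s (k+1)) Filter.atTop (nhds ((P 0).coeff s)) :=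
  (tendsto_Sfun P s).comp (Filter.tendsto_add_atTop_nat 1)

lemma tendsto_inv_natCast :
    Filter.Tendsto (fun k : ℕ => (((k:ℂ)+1))⁻¹) Filter.atTop (nhds 0) := by
  apply squeeze_zero_norm (a := fun k : ℕ => 1 / ((k:ℝ) + 1))
  · intro k
    rw [norm_inv, show ((k:ℂ)+1) = ((k+1 : ℕ) : ℂ) from by push_cast; ring,
      Complex.norm_natCast, one_div]
    push_cast
    exact le_refl _
  · exact tendsto_one_div_add_atTop_nhds_zero_nat

def seriesOp (P : ℕ → Polynomial ℂ) : Module.End ℂ PS where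
  toFun f := PowerSeries.mk fun n => ∑ ν ∈ Finset.range (n+1),
    coeff n ((Polynomial.aeval opA (P ν)) ((opB ^ ν) f))
  map_add' f g := by
    ext n
    simp [map_add, Finset.sum_add_distrib]
  map_smul' c f := by
    ext n
    simp [map_smul, Finset.mul_sum]

lemma seriesOp_mem (P : ℕ → Polynomial ℂ) : seriesOp P ∈ Atilde :=
  ⟨P, fun f n => by simp [seriesOp]⟩

lemma seriesOp_coeff (P : ℕ → Polynomial ℂ) (f : PS) (n : ℕ) :
    coeff n (seriesOp P f) = ∑ ν ∈ Finset.range (n+1),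
      coeff n ((Polynomial.aeval opA (P ν)) ((opB ^ ν) f)) := by
  simp [seriesOp]

lemma exists_factor (uE vE : Module.End ℂ PS) (hu : uE ∈ Atilde) (hv : vE ∈ Atilde)
    (lam : ℂ)
    (hrel : uE * (opA - algebraMap ℂ (Module.End ℂ PS) lam) + vE * opB = 0) :
    ∃ x : Module.End ℂ PS, x ∈ Atilde ∧ x * opB = uE := by
  obtain ⟨P, hP⟩ := hu
  obtain ⟨R, hR⟩ := hv
  have happ : ∀ f : PS, uE (opA f) - lam • uE f + vE (opB f) = 0 := by
    intro f
    have := congrFun (congrArg DFunLike.coe hrel) f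
    simp only [LinearMap.add_apply, Module.End.mul_apply, LinearMap.sub_apply,
      LinearMap.zero_apply] at this
    rw [show (algebraMap ℂ (Module.End ℂ PS) lam) f = lam • f from rfl] at this
    rw [← this, map_sub, map_smul]
  have hopAX : ∀ k : ℕ, opA ((X:PS)^k) = (X:PS)^(k+1) := by
    intro k
    rw [show opA ((X:PS)^k) = X * X^k from rfl, ← pow_succ']
  -- the relation E(s,k)
  have Es : ∀ s k : ℕ, Sfun P s (k+1) - lam * Sfun P (s+1) k
      + ((k:ℂ)+1)⁻¹ * Sfun R s (k+1) = 0 := by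
    intro s k
    have h0 := congrArg (coeff (k+1+s)) (happ ((X:PS)^k))
    rw [map_add, map_sub, map_smul, hopAX, opB_X_pow, map_smul, map_smul,
      coeff_T_Xpow uE P hP (k+1) s, map_zero] at h0
    rw [show k + 1 + s = k + (s+1) from by omega] at h0
    rw [coeff_T_Xpow uE P hP k (s+1)] at h0
    rw [show k + (s+1) = (k+1) + s from by omega] at h0
    rw [coeff_T_Xpow vE R hR (k+1) s] at h0
    simpa [smul_eq_mul] using h0
  -- the relation at "s = -1", k = 0
  have Em1 : lam * (P 0).coeff 0 = 0 := by
    have h0 := congrArg (coeff 0) (happ ((X:PS)^0))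
    rw [map_add, map_sub, map_smul, hopAX, opB_X_pow, map_smul, map_smul,
      coeff_T_Xpow_lt uE P hP 1 0 (by omega), map_zero] at h0
    rw [show (0:ℕ) + 1 = 0 + 1 from rfl] at h0
    rw [coeff_T_Xpow_lt vE R hR (0+1) 0 (by omega)] at h0
    have h1 := coeff_T_Xpow uE P hP 0 0
    rw [show (0:ℕ)+0 = 0 from rfl] at h1
    rw [h1] at h0
    have : Sfun P 0 0 = (P 0).coeff 0 := by
      simp [Sfun]
    rw [this] at h0
    simp only [smul_eq_mul, mul_zero, add_zero, zero_sub, neg_eq_zero] at h0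
    exact h0
  -- limits: key recurrence on the coefficients of `P 0`
  have key : ∀ s : ℕ, (P 0).coeff s = lam * (P 0).coeff (s+1) := by
    intro s
    have t1 : Filter.Tendsto (fun k : ℕ => Sfun P s (k+1) + ((k:ℂ)+1)⁻¹ * Sfun R s (k+1))
        Filter.atTop (nhds ((P 0).coeff s)) := by
      have := (tendsto_Sfun_succ P s).add (tendsto_inv_natCast.mul (tendsto_Sfun_succ R s))
      simpa using this
    have t2 : Filter.Tendsto (fun k : ℕ => lam * Sfun P (s+1) k)
        Filter.atTop (nhds (lam * (P 0).coeff (s+1))) :=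
      (tendsto_Sfun P (s+1)).const_mul lam
    have heq : (fun k : ℕ => Sfun P s (k+1) + ((k:ℂ)+1)⁻¹ * Sfun R s (k+1))
        = fun k : ℕ => lam * Sfun P (s+1) k := by
      funext k
      linear_combination Es s k
    rw [heq] at t1
    exact tendsto_nhds_unique t1 t2
  -- deduce that `P 0 = 0`
  have hP0 : P 0 = 0 := by
    ext j
    rw [Polynomial.coeff_zero]
    rcases eq_or_ne lam 0 with hl | hl
    · rw [key j, hl, zero_mul]
    · have h00 : (P 0).coeff 0 = 0 := by
        rcases mul_eq_zero.mp Em1 with h | h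
        · exact absurd h hl
        · exact h
      induction j with
      | zero => exact h00
      | succ j ih =>
          have := key j
          rw [ih] at this
          exact (mul_eq_zero.mp this.symm).resolve_left hl
  -- construct the factor
  refine ⟨seriesOp (fun ν => P (ν+1)), seriesOp_mem _, ?_⟩
  ext f n
  rw [Module.End.mul_apply, seriesOp_coeff, hP f n]
  have hterm : ∀ ν : ℕ,
      coeff n ((Polynomial.aeval opA (P (ν+1))) ((opB ^ ν) (opB f)))
        = coeff n ((Polynomial.aeval opA (P (ν+1))) ((opB ^ (ν+1)) f)) := by
    intro ν
    rw [show (opB ^ ν) (opB f) = (opB ^ (ν+1)) f from by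
      rw [pow_succ, Module.End.mul_apply]]
  have htop : coeff n ((Polynomial.aeval opA (P (n+1))) ((opB ^ (n+1)) f)) = 0 := by
    rw [aeval_opA, PowerSeries.coeff_mul]
    refine Finset.sum_eq_zero fun p hp => ?_
    have : p.2 < n + 1 := by
      have := Finset.HasAntidiagonal.mem_antidiagonal.mp hp
      omega
    rw [opB_pow_order (n+1) f p.2 this, mul_zero]
  have hbot : coeff n ((Polynomial.aeval opA (P 0)) ((opB ^ 0) f)) = 0 := by
    rw [hP0, map_zero, LinearMap.zero_apply, map_zero]
  calc ∑ ν ∈ Finset.range (n+1),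
        coeff n ((Polynomial.aeval opA (P (ν+1))) ((opB ^ ν) (opB f)))
      = ∑ ν ∈ Finset.range (n+1),
        coeff n ((Polynomial.aeval opA (P (ν+1))) ((opB ^ (ν+1)) f)) :=
        Finset.sum_congr rfl fun ν _ => hterm ν
    _ = ∑ ν ∈ Finset.range n,
        coeff n ((Polynomial.aeval opA (P (ν+1))) ((opB ^ (ν+1)) f)) := by
        rw [Finset.sum_range_succ, htop, add_zero]
    _ = ∑ ν ∈ Finset.range (n+1),
        coeff n ((Polynomial.aeval opA (P ν)) ((opB ^ ν) f)) := by
        rw [Finset.sum_range_succ' (fun ν => coeff n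
          ((Polynomial.aeval opA (P ν)) ((opB ^ ν) f))) n, hbot, add_zero]



/-- Let `V_λ := Ã/(Ã·(a−λ) + Ã·b)`.  The sequence
`0 → Ã →^α Ã² →^β Ã → V_λ → 0`, with `α(x) := (x·b, −x·(a−b−λ))` and
`β(u,v) := u·(a−λ) + v·b`, is an exact (free) resolution of `V_λ` by left
`Ã`-modules: `α` is injective, `ker β = im α`, and the image of `β` is the
left ideal `Ã·(a−λ) + Ã·b`, i.e. the kernel of `Ã → V_λ`.
Here `Ã` is realized as the subalgebra `Asub` of `End_ℂ(ℂ[[z]])` with carrier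
`Atilde`, and `aA`, `bA` are its generators `a`, `b`. -/
theorem stmt_13 (Asub : Subalgebra ℂ (Module.End ℂ PS))
    (hA : (Asub : Set (Module.End ℂ PS)) = Atilde)
    (aA bA : Asub) (haA : (aA : Module.End ℂ PS) = opA)
    (hbA : (bA : Module.End ℂ PS) = opB) (lam : ℂ) :
    Function.Injective (fun x : Asub =>
        ((x * bA, -(x * (aA - bA - algebraMap ℂ Asub lam))) : Asub × Asub)) ∧
    (∀ u v : Asub, u * (aA - algebraMap ℂ Asub lam) + v * bA = 0 ↔
        ∃ x : Asub, u = x * bA ∧ v = -(x * (aA - bA - algebraMap ℂ Asub lam))) ∧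
    (∀ y : Asub,
        y ∈ (Submodule.span Asub {aA - algebraMap ℂ Asub lam} ⊔
              Submodule.span Asub {bA} : Submodule Asub Asub) ↔
        ∃ u v : Asub, y = u * (aA - algebraMap ℂ Asub lam) + v * bA) := by
  have hmem : ∀ x : Asub, (x : Module.End ℂ PS) ∈ Atilde := fun x => hA ▸ x.2
  have L1A : ∀ x : Asub, x * bA = 0 → x = 0 := by
    intro x hx
    apply Subtype.ext
    apply L1 _ (hmem x)
    have : ((x * bA : Asub) : Module.End ℂ PS) = 0 := by rw [hx]; rfl
    rwa [MulMemClass.coe_mul, hbA] at this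
  have hBA : bA * aA = aA * bA - bA * bA := by
    apply Subtype.ext
    push_cast
    rw [haA, hbA, commrel]
  have hq : bA * (aA - algebraMap ℂ Asub lam)
      = (aA - bA - algebraMap ℂ Asub lam) * bA := by
    have e1 := mul_sub bA aA (algebraMap ℂ Asub lam)
    have e2 := sub_mul (aA - bA) (algebraMap ℂ Asub lam) bA
    have e3 := sub_mul aA bA bA
    have c1 : bA * algebraMap ℂ Asub lam = algebraMap ℂ Asub lam * bA :=
      (Algebra.commutes lam bA).symm
    rw [e1, e2, e3, hBA, c1]
  refine ⟨?_, ?_, ?_⟩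
  · -- injectivity of α
    intro x x' h
    have h1 : x * bA = x' * bA := congrArg Prod.fst h
    have h2 : (x - x') * bA = 0 := by
      have e := sub_mul x x' bA
      rw [e, h1, sub_self]
    have h3 := L1A _ h2
    exact sub_eq_zero.mp h3
  · -- exactness in the middle
    intro u v
    constructor
    · intro h
      have hrelE : (u : Module.End ℂ PS) * (opA - algebraMap ℂ (Module.End ℂ PS) lam)
          + (v : Module.End ℂ PS) * opB = 0 := by
        have h0 := congrArg (Subtype.val) h
        push_cast at h0
        rwa [haA, hbA] at h0
      obtain ⟨x, hxmem, hxb⟩ := exists_factor u v (hmem u) (hmem v) lam hrelE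
      have hxA : x ∈ Asub := by rw [← SetLike.mem_coe, hA]; exact hxmem
      refine ⟨⟨x, hxA⟩, ?_, ?_⟩
      · apply Subtype.ext
        push_cast
        rw [hbA, hxb]
      · have hcancel : (v + (⟨x, hxA⟩ : Asub) * (aA - bA - algebraMap ℂ Asub lam)) * bA
            = 0 := by
          have d1 := add_mul v ((⟨x, hxA⟩ : Asub) * (aA - bA - algebraMap ℂ Asub lam)) bA
          have d2 := mul_assoc (⟨x, hxA⟩ : Asub) (aA - bA - algebraMap ℂ Asub lam) bA
          have d3 := mul_assoc (⟨x, hxA⟩ : Asub) bA (aA - algebraMap ℂ Asub lam)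
          rw [d1, d2, ← hq, ← d3]
          apply Subtype.ext
          push_cast
          rw [hbA, hxb, haA]
          simpa [add_comm] using hrelE
        have := L1A _ hcancel
        exact Subtype.ext (by
          have h' := congrArg Subtype.val this
          push_cast at h' ⊢
          exact eq_neg_of_add_eq_zero_left (G := Module.End ℂ PS) h')
    · rintro ⟨x, rfl, rfl⟩
      have hxx : x * bA * (aA - algebraMap ℂ Asub lam)
          = x * (aA - bA - algebraMap ℂ Asub lam) * bA := by
        rw [mul_assoc, hq, mul_assoc]
      have e : -(x * (aA - bA - algebraMap ℂ Asub lam)) * bA = -(x * (aA - bA - algebraMap ℂ Asub lam) * bA) :=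
        Subtype.ext (by push_cast; exact neg_mul (α := Module.End ℂ PS) _ _)
      rw [hxx, e]
      exact add_neg_cancel (x * (aA - bA - algebraMap ℂ Asub lam) * bA)
  · -- image of β is the ideal
    intro y
    constructor
    · intro hy
      rw [Submodule.mem_sup] at hy
      obtain ⟨p, hp, q, hq', rfl⟩ := hy
      rw [Submodule.mem_span_singleton] at hp hq'
      obtain ⟨u, rfl⟩ := hp
      obtain ⟨v, rfl⟩ := hq'
      exact ⟨u, v, rfl⟩
    · rintro ⟨u, v, rfl⟩
      rw [Submodule.mem_sup]
      refine ⟨u * (aA - algebraMap ℂ Asub lam), ?_, v * bA, ?_, rfl⟩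
      · rw [Submodule.mem_span_singleton]
        exact ⟨u, rfl⟩
      · rw [Submodule.mem_span_singleton]
        exact ⟨v, rfl⟩

end
end
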